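/- If a compression operator C satisfies α‖x‖² ≤ E‖C(x)‖² ≤ β⟨E[C(x)], x⟩ for all x ∈ ℝ^d with α, β > 0, then β² ≥ α. -/

import Mathlib

open MeasureTheory

/-- If `C` satisfies `α‖x‖² ≤ E‖C(x)‖² ≤ β⟨E[C(x)], x⟩` for all `x ∈ ℝ^d`
with `α, β > 0`, then `β² ≥ α`. -/
theorem stmt0 {d : ℕ} (hd : 0 < d) {Ω : Type*} [MeasurableSpace Ω]
    (μ : Measure Ω) [IsProbabilityMeasure μ]
    (C : EuclideanSpace ℝ (Fin d) → Ω → EuclideanSpace ℝ (Fin d))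
    (α β : ℝ) (hα : 0 < α) (hβ : 0 < β)
    (hintC : ∀ x, Integrable (C x) μ)
    (hintC2 : ∀ x, Integrable (fun ω => ‖C x ω‖ ^ 2) μ)
    (hB : ∀ x, α * ‖x‖ ^ 2 ≤ ∫ ω, ‖C x ω‖ ^ 2 ∂μ ∧
      ∫ ω, ‖C x ω‖ ^ 2 ∂μ ≤ β * (inner ℝ (∫ ω, C x ω ∂μ) x : ℝ)) :
    β ^ 2 ≥ α := by
  set x : EuclideanSpace ℝ (Fin d) := EuclideanSpace.single (⟨0, hd⟩ : Fin d) (1:ℝ) with hxdef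
  have hx : ‖x‖ = 1 := by simp [hxdef, EuclideanSpace.norm_single]
  obtain ⟨h1, h2⟩ := hB x
  set I := ∫ ω, ‖C x ω‖ ^ 2 ∂μ with hI
  set m := ∫ ω, C x ω ∂μ with hm
  set E := ∫ ω, ‖C x ω‖ ∂μ with hE
  have hE0 : 0 ≤ E := integral_nonneg fun ω => norm_nonneg _
  have hinner : (inner ℝ m x : ℝ) ≤ E := by
    calc (inner ℝ m x : ℝ) ≤ ‖m‖ * ‖x‖ := real_inner_le_norm m x
    _ = ‖m‖ := by rw [hx, mul_one]
    _ ≤ E := norm_integral_le_integral_norm _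
  -- E^2 ≤ I via variance nonneg
  have hmem : MemLp (fun ω => ‖C x ω‖) 2 μ := by
    rw [memLp_two_iff_integrable_sq ((hintC x).aestronglyMeasurable.norm)]
    exact hintC2 x
  have hvar : 0 ≤ I - E ^ 2 := by
    have := ProbabilityTheory.variance_nonneg (fun ω => ‖C x ω‖) μ
    rwa [ProbabilityTheory.variance_eq_sub hmem, sub_nonneg, ← sub_nonneg] at this
    -- might need adjustment
  have hα1 : α ≤ I := by simpa [hx] using h1
  have hIE : I ≤ β * E := h2.trans (by nlinarith)
  nlinarith [mul_le_mul_of_nonneg_left hIE hβ.le, mul_le_mul_of_nonneg_right hIE hE0]
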